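/- arXiv:1007.0938 — 2 statements merged into one kernel-verified Lean document; each statement's English description precedes it below -/
import Mathlib

section
/- Let V : ℝ → ℝ satisfy ∫_ℝ |V(x)|(1+|x|) dx < ∞, let k ∈ ℝ \ {0}, and let (T, R) be scattering data for -d²/dx² - V at k. Then |R| ≤ 1. -/
open MeasureTheory Filter Real

noncomputable section

/-- `-κ²` (with `κ > 0`) is a negative eigenvalue of the Schrödinger operator
`H_h(y) = -h² d²/dx² - y`. -/
def IsNegEig (h : ℝ) (y : ℝ → ℝ) (κ : ℝ) : Prop :=
  0 < κ ∧ ∃ ψ : ℝ → ℝ, ψ ≠ 0 ∧ ContDiff ℝ 2 ψ ∧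
    Integrable (fun x => (ψ x) ^ 2) ∧
    ∀ x : ℝ, -h ^ 2 * deriv (deriv ψ) x - y x * ψ x = -κ ^ 2 * ψ x

/-- `E_h(y)`: the set of `κ > 0` such that `-κ²` is a negative eigenvalue of `H_h(y)`. -/
def negEigSet (h : ℝ) (y : ℝ → ℝ) : Set ℝ := {κ | IsNegEig h y κ}

/-- `ψ` is an `L²`-normalized eigenfunction of `H_h(y)` with eigenvalue `-κ²`. -/
def IsNormalizedEigfun (h : ℝ) (y : ℝ → ℝ) (κ : ℝ) (ψ : ℝ → ℝ) : Prop :=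
  ψ ≠ 0 ∧ ContDiff ℝ 2 ψ ∧ Integrable (fun x => (ψ x) ^ 2) ∧
  (∀ x : ℝ, -h ^ 2 * deriv (deriv ψ) x - y x * ψ x = -κ ^ 2 * ψ x) ∧
  ∫ x : ℝ, (ψ x) ^ 2 = 1

/-- The class `B` of potentials: nonnegative, twice differentiable with integrable
first and second derivatives, and in the Faddeev class `L¹₁(ℝ)`. -/
def InClassB (y : ℝ → ℝ) : Prop :=
  (∀ x : ℝ, 0 ≤ y x) ∧
  (∀ x : ℝ, DifferentiableAt ℝ y x) ∧
  (∀ x : ℝ, DifferentiableAt ℝ (deriv y) x) ∧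
  Integrable (deriv y) ∧ Integrable (deriv (deriv y)) ∧
  Integrable (fun x => |y x| * (1 + |x|))

/-- `(T, R)` is scattering data for `-d²/dx² - V` at `k`. -/
def IsScatteringData (V : ℝ → ℝ) (k : ℝ) (T R : ℂ) : Prop :=
  ∃ ψ : ℝ → ℂ, ContDiff ℝ 2 ψ ∧
    (∀ x : ℝ, -deriv (deriv ψ) x - (V x : ℂ) * ψ x = (k : ℂ) ^ 2 * ψ x) ∧
    Tendsto (fun x : ℝ => ψ x - T * Complex.exp (-(Complex.I * k * x))) atBot (nhds 0) ∧
    Tendsto (fun x : ℝ =>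
      ψ x - (Complex.exp (-(Complex.I * k * x)) + R * Complex.exp (Complex.I * k * x)))
      atTop (nhds 0)

/-- The operator `-d²/dx² - V` is reflectionless. -/
def Reflectionless (V : ℝ → ℝ) : Prop :=
  ∀ k : ℝ, k ≠ 0 → ∃ T : ℂ, IsScatteringData V k T 0

section aux
open Set

lemma hasDerivAt_cexp_mul (c : ℂ) (x : ℝ) :
    HasDerivAt (fun t : ℝ => Complex.exp (c * t)) (c * Complex.exp (c * x)) x := by
  have h : HasDerivAt (fun z : ℂ => Complex.exp (c * z)) (c * Complex.exp (c * x)) (x : ℂ) := by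
    simpa [mul_comm] using ((hasDerivAt_id (x:ℂ)).const_mul c).cexp
  exact h.comp_ofReal

lemma contDiff_two_iff (f : ℝ → ℂ) : ContDiff ℝ 2 f ↔ Differentiable ℝ f ∧
    Differentiable ℝ (deriv f) ∧ Continuous (deriv (deriv f)) := by
  rw [show (2 : WithTop ℕ∞) = 1 + 1 from rfl, contDiff_succ_iff_deriv, contDiff_one_iff_deriv]
  simp [and_assoc]

lemma norm_exp_mul_ofReal (k : ℝ) (x : ℝ) : ‖Complex.exp (Complex.I * k * x)‖ = 1 := by
  simp [Complex.norm_exp]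

lemma key_atTop_pos {k : ℝ} (hk : 0 < k) {φ : ℝ → ℂ}
    (hφ : ContDiff ℝ 2 φ)
    (hfi : IntegrableOn (fun x => deriv (deriv φ) x + (k:ℂ)^2 * φ x) (Ioi 0))
    (h0 : Tendsto φ atTop (nhds 0)) :
    Tendsto (deriv φ) atTop (nhds 0) := by
  obtain ⟨hd1, hd2, hc2⟩ := (contDiff_two_iff φ).1 hφ
  set f : ℝ → ℂ := fun x => deriv (deriv φ) x + (k:ℂ)^2 * φ x with hf
  have hfcont : Continuous f := hc2.add (continuous_const.mul (hd1.continuous))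
  set c : ℂ := Complex.I * k with hcdef
  have hcsq : c ^ 2 = -(k:ℂ)^2 := by rw [hcdef, mul_pow, Complex.I_sq]; ring
  set u : ℝ → ℂ := fun x => Complex.exp (c * x) * (deriv φ x - c * φ x) with hudef
  set v : ℝ → ℂ := fun x => Complex.exp (-c * x) * (deriv φ x + c * φ x) with hvdef
  have hud : ∀ x : ℝ, HasDerivAt u (Complex.exp (c * x) * f x) x := by
    intro x
    have h2 : HasDerivAt (fun t => deriv φ t - c * φ t)
        (deriv (deriv φ) x - c * deriv φ x) x :=
      ((hd2 x).hasDerivAt).sub (((hd1 x).hasDerivAt).const_mul c)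
    have h3 := (hasDerivAt_cexp_mul c x).mul h2
    refine h3.congr_deriv ?_
    simp only [hf]
    linear_combination (-(Complex.exp (c * x) * φ x)) * hcsq
  have hvd : ∀ x : ℝ, HasDerivAt v (Complex.exp (-c * x) * f x) x := by
    intro x
    have h2 : HasDerivAt (fun t => deriv φ t + c * φ t)
        (deriv (deriv φ) x + c * deriv φ x) x :=
      ((hd2 x).hasDerivAt).add (((hd1 x).hasDerivAt).const_mul c)
    have h3 := (hasDerivAt_cexp_mul (-c) x).mul h2
    refine h3.congr_deriv ?_
    simp only [hf]
    linear_combination (-(Complex.exp (-c * x) * φ x)) * hcsq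
  have hecont : Continuous fun t : ℝ => Complex.exp (c * t) :=
    Complex.continuous_exp.comp (continuous_const.mul Complex.continuous_ofReal)
  have hecont' : Continuous fun t : ℝ => Complex.exp (-c * t) :=
    Complex.continuous_exp.comp (continuous_const.mul Complex.continuous_ofReal)
  have hnorme : ∀ s : ℂ, s.re = 0 → ∀ t : ℝ, ‖Complex.exp (s * t)‖ = 1 := by
    intro s hs t
    simp [Complex.norm_exp, Complex.mul_re, hs,
      Complex.ofReal_re, Complex.ofReal_im]
  have hcre : c.re = 0 := by simp [hcdef]
  have hcre' : (-c).re = 0 := by simp [hcdef]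
  have hIu : IntegrableOn (fun t : ℝ => Complex.exp (c * t) * f t) (Ioi 0) :=
    hfi.bdd_mul (hecont.aestronglyMeasurable) (ae_of_all _ fun t => le_of_eq (hnorme c hcre t))
  have hIv : IntegrableOn (fun t : ℝ => Complex.exp (-c * t) * f t) (Ioi 0) :=
    hfi.bdd_mul (hecont'.aestronglyMeasurable) (ae_of_all _ fun t => le_of_eq (hnorme _ hcre' t))
  have hftc_u : ∀ x : ℝ, u x = u 0 + ∫ t in (0:ℝ)..x, Complex.exp (c * t) * f t := by
    intro x
    rw [intervalIntegral.integral_eq_sub_of_hasDerivAt (fun t _ => hud t)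
      ((hecont.mul hfcont).intervalIntegrable _ _)]
    ring
  have hftc_v : ∀ x : ℝ, v x = v 0 + ∫ t in (0:ℝ)..x, Complex.exp (-c * t) * f t := by
    intro x
    rw [intervalIntegral.integral_eq_sub_of_hasDerivAt (fun t _ => hvd t)
      ((hecont'.mul hfcont).intervalIntegrable _ _)]
    ring
  set L : ℂ := u 0 + ∫ t in Ioi (0:ℝ), Complex.exp (c * t) * f t with hLdef
  set M : ℂ := v 0 + ∫ t in Ioi (0:ℝ), Complex.exp (-c * t) * f t with hMdef
  have huL : Tendsto u atTop (nhds L) := by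
    have := (MeasureTheory.intervalIntegral_tendsto_integral_Ioi 0 hIu tendsto_id).const_add (u 0)
    refine this.congr fun x => (hftc_u x).symm
  have hvM : Tendsto v atTop (nhds M) := by
    have := (MeasureTheory.intervalIntegral_tendsto_integral_Ioi 0 hIv tendsto_id).const_add (v 0)
    refine this.congr fun x => (hftc_v x).symm
  have hxu : ∀ x : ℝ, Complex.exp (-c * x) * u x = deriv φ x - c * φ x := by
    intro x
    have h00 : (-c) * (x:ℂ) + c * (x:ℂ) = 0 := by ring
    rw [hudef, ← mul_assoc, ← Complex.exp_add, h00, Complex.exp_zero, one_mul]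
  have hxv : ∀ x : ℝ, Complex.exp (c * x) * v x = deriv φ x + c * φ x := by
    intro x
    have h00 : c * (x:ℂ) + (-c) * (x:ℂ) = 0 := by ring
    rw [hvdef, ← mul_assoc, ← Complex.exp_add, h00, Complex.exp_zero, one_mul]
  have h2ik : Tendsto (fun x : ℝ => Complex.exp (c * x) * v x - Complex.exp (-c * x) * u x)
      atTop (nhds 0) := by
    have h3 : Tendsto (fun x : ℝ => (2 * c) * φ x) atTop (nhds 0) := by
      simpa using h0.const_mul (2 * c)
    refine h3.congr fun x => ?_
    rw [hxu x, hxv x]; ring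
  have hk0 : (k : ℂ) ≠ 0 := Complex.ofReal_ne_zero.mpr (ne_of_gt hk)
  set s : ℕ → ℝ := fun n => (2 * π * n) / k with hsdef
  have hs : Tendsto s atTop atTop := by
    have h1 : Tendsto (fun n : ℕ => (n : ℝ) * (2 * π / k)) atTop atTop :=
      tendsto_natCast_atTop_atTop.atTop_mul_const (by positivity)
    refine h1.congr fun n => ?_
    rw [hsdef]; field_simp
  have hes : ∀ n : ℕ, Complex.exp (c * s n) = 1 := by
    intro n
    have h1 : c * ((s n : ℝ) : ℂ) = ((n : ℤ) : ℂ) * (2 * (π:ℝ) * Complex.I) := by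
      rw [hcdef, hsdef]; push_cast; field_simp
    rw [h1, Complex.exp_int_mul_two_pi_mul_I]
  have hes' : ∀ n : ℕ, Complex.exp (-c * s n) = 1 := by
    intro n
    rw [neg_mul, Complex.exp_neg, hes n, inv_one]
  set t : ℕ → ℝ := fun n => (2 * π * n + π / 2) / k with htdef
  have ht : Tendsto t atTop atTop := by
    have h1 : Tendsto (fun n : ℕ => (n : ℝ) * (2 * π / k) + (π / 2) / k) atTop atTop :=
      tendsto_atTop_add_const_right _ _
        (tendsto_natCast_atTop_atTop.atTop_mul_const (by positivity))
    refine h1.congr fun n => ?_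
    rw [htdef]; field_simp
  have het : ∀ n : ℕ, Complex.exp (c * t n) = Complex.I := by
    intro n
    have h1 : c * ((t n : ℝ) : ℂ) = ((n : ℤ) : ℂ) * (2 * (π:ℝ) * Complex.I)
        + ((π/2 : ℝ) : ℂ) * Complex.I := by
      rw [hcdef, htdef]; push_cast; field_simp
    rw [h1, Complex.exp_add, Complex.exp_int_mul_two_pi_mul_I, one_mul, Complex.exp_mul_I]
    push_cast
    rw [Complex.cos_pi_div_two, Complex.sin_pi_div_two]; ring
  have het' : ∀ n : ℕ, Complex.exp (-c * t n) = -Complex.I := by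
    intro n
    rw [neg_mul, Complex.exp_neg, het n, Complex.inv_I]
  have hMLsub : M - L = 0 := by
    have h1 : Tendsto (fun n => v (s n) - u (s n)) atTop (nhds (M - L)) :=
      (hvM.comp hs).sub (huL.comp hs)
    have h2 : Tendsto (fun n => v (s n) - u (s n)) atTop (nhds 0) := by
      refine (h2ik.comp hs).congr fun n => ?_
      simp only [Function.comp_apply, hes n, hes' n, one_mul]
    exact (tendsto_nhds_unique h1 h2)
  have hMLadd : M + L = 0 := by
    have h1 : Tendsto (fun n => Complex.I * v (t n) + Complex.I * u (t n)) atTop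
        (nhds (Complex.I * M + Complex.I * L)) :=
      ((hvM.comp ht).const_mul _).add ((huL.comp ht).const_mul _)
    have h2 : Tendsto (fun n => Complex.I * v (t n) + Complex.I * u (t n)) atTop (nhds 0) := by
      refine (h2ik.comp ht).congr fun n => ?_
      simp only [Function.comp_apply, het n, het' n]; ring
    have h3 := tendsto_nhds_unique h1 h2
    have h4 : Complex.I * (M + L) = 0 := by linear_combination h3
    exact (mul_eq_zero.mp h4).resolve_left Complex.I_ne_zero
  have hL : L = 0 := by linear_combination (hMLadd - hMLsub) / 2
  have hM : M = 0 := by linear_combination (hMLadd + hMLsub) / 2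
  rw [hL] at huL
  rw [hM] at hvM
  have hnu : Tendsto (fun x : ℝ => Complex.exp (-c * x) * u x) atTop (nhds 0) := by
    rw [tendsto_zero_iff_norm_tendsto_zero]
    have h1 : Tendsto (fun x => ‖u x‖) atTop (nhds 0) := by
      simpa using tendsto_zero_iff_norm_tendsto_zero.mp huL
    refine h1.congr fun x => ?_
    simp only [norm_mul, hnorme _ hcre' x, one_mul]
  have hnv : Tendsto (fun x : ℝ => Complex.exp (c * x) * v x) atTop (nhds 0) := by
    rw [tendsto_zero_iff_norm_tendsto_zero]
    have h1 : Tendsto (fun x => ‖v x‖) atTop (nhds 0) := by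
      simpa using tendsto_zero_iff_norm_tendsto_zero.mp hvM
    refine h1.congr fun x => ?_
    simp only [norm_mul, hnorme _ hcre x, one_mul]
  have hfin : Tendsto (fun x : ℝ =>
      (Complex.exp (-c * x) * u x + Complex.exp (c * x) * v x) / 2) atTop (nhds 0) := by
    simpa using (hnu.add hnv).div_const 2
  refine hfin.congr fun x => ?_
  rw [hxu x, hxv x]; ring

lemma key_atTop {k : ℝ} (hk : k ≠ 0) {φ : ℝ → ℂ}
    (hφ : ContDiff ℝ 2 φ)
    (hfi : IntegrableOn (fun x => deriv (deriv φ) x + (k:ℂ)^2 * φ x) (Ioi 0))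
    (h0 : Tendsto φ atTop (nhds 0)) :
    Tendsto (deriv φ) atTop (nhds 0) := by
  have habs : ((|k| : ℝ) : ℂ)^2 = (k:ℂ)^2 := by
    norm_cast; exact sq_abs k
  refine key_atTop_pos (abs_pos.mpr hk) hφ ?_ h0
  simpa only [habs] using hfi

lemma key_atBot {k : ℝ} (hk : k ≠ 0) {φ : ℝ → ℂ}
    (hφ : ContDiff ℝ 2 φ)
    (hfi : IntegrableOn (fun x => deriv (deriv φ) x + (k:ℂ)^2 * φ x) (Iio 0))
    (h0 : Tendsto φ atBot (nhds 0)) :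
    Tendsto (deriv φ) atBot (nhds 0) := by
  set ψ : ℝ → ℂ := fun x => φ (-x) with hψdef
  have hψ : ContDiff ℝ 2 ψ := hφ.comp contDiff_neg
  have hdψ : deriv ψ = fun x => -deriv φ (-x) := by
    funext x; exact deriv_comp_neg φ x
  have hddψ : deriv (deriv ψ) = fun x => deriv (deriv φ) (-x) := by
    funext x
    rw [hdψ]
    have h5 : deriv (fun x => -deriv φ (-x)) x = -deriv (fun x => deriv φ (-x)) x := deriv.neg
    rw [h5, deriv_comp_neg (deriv φ) x, neg_neg]
  have hfi' : IntegrableOn (fun x => deriv (deriv ψ) x + (k:ℂ)^2 * ψ x) (Ioi 0) := by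
    have h1 := (MeasurePreserving.integrableOn_comp_preimage
      (Measure.measurePreserving_neg (volume : Measure ℝ))
      (Homeomorph.neg ℝ).measurableEmbedding).2 hfi
    rw [hddψ, hψdef]
    simpa [Function.comp_def, neg_preimage, neg_Iio, neg_zero] using h1
  have h0' : Tendsto ψ atTop (nhds 0) := h0.comp tendsto_neg_atTop_atBot
  have hmain := key_atTop hk hψ hfi' h0'
  rw [hdψ] at hmain
  have h2 : Tendsto (fun x => deriv φ (-x)) atTop (nhds 0) := by
    simpa using hmain.neg
  have h3 := h2.comp tendsto_neg_atBot_atTop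
  refine h3.congr fun x => ?_
  simp

open ComplexConjugate in
lemma wronskian_const {V : ℝ → ℝ} {k : ℝ} {ψ : ℝ → ℂ} (hC : ContDiff ℝ 2 ψ)
    (hODE : ∀ x : ℝ, -deriv (deriv ψ) x - (V x : ℂ) * ψ x = (k : ℂ)^2 * ψ x) (a : ℝ) :
    ψ a * conj (deriv ψ a) - deriv ψ a * conj (ψ a)
      = ψ 0 * conj (deriv ψ 0) - deriv ψ 0 * conj (ψ 0) := by
  obtain ⟨hd1, hd2, hdd⟩ := (contDiff_two_iff ψ).1 hC
  set W : ℝ → ℂ := fun x => ψ x * conj (deriv ψ x) - deriv ψ x * conj (ψ x) with hWdef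
  have hW : ∀ x : ℝ, HasDerivAt W 0 x := by
    intro x
    have h1 : HasDerivAt ψ (deriv ψ x) x := (hd1 x).hasDerivAt
    have h2 : HasDerivAt (deriv ψ) (deriv (deriv ψ) x) x := (hd2 x).hasDerivAt
    have h3 := (h1.mul h2.star).sub (h2.mul h1.star)
    have hpp : deriv (deriv ψ) x = -((V x : ℂ) + (k:ℂ)^2) * ψ x := by
      linear_combination - hODE x
    refine h3.congr_deriv ?_
    rw [hpp]
    simp only [star_mul', star_neg, star_add, Complex.star_def, Complex.conj_ofReal, map_pow]
    ring
  have hWd : Differentiable ℝ W := fun x => (hW x).differentiableAt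
  have hW0 : ∀ x, deriv W x = 0 := fun x => (hW x).deriv
  exact is_const_of_deriv_eq_zero hWd hW0 a 0

lemma exists_seq {k : ℝ} (hk : k ≠ 0) :
    ∃ s : ℕ → ℝ, Tendsto s atTop atTop ∧ ∀ n, Complex.exp (Complex.I * k * s n) = 1 := by
  refine ⟨fun n => (2 * π * n) / |k|, ?_, ?_⟩
  · have hp : 0 < 2 * π / |k| := div_pos (by positivity) (abs_pos.mpr hk)
    have h1 : Tendsto (fun n : ℕ => (n : ℝ) * (2 * π / |k|)) atTop atTop :=
      tendsto_natCast_atTop_atTop.atTop_mul_const hp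
    refine h1.congr fun n => ?_
    field_simp
  · intro n
    rcases hk.lt_or_gt with hneg | hpos
    · have hr : k * ((2 * π * n) / |k|) = ((-(n:ℤ) : ℤ) : ℝ) * (2 * π) := by
        rw [abs_of_neg hneg]; push_cast; field_simp
      have h1 : Complex.I * k * (((2 * π * n) / |k| : ℝ) : ℂ)
          = ((-(n : ℤ) : ℤ) : ℂ) * (2 * (π : ℝ) * Complex.I) := by
        calc Complex.I * k * (((2 * π * n) / |k| : ℝ) : ℂ)
            = Complex.I * ((k * ((2 * π * n) / |k|) : ℝ) : ℂ) := by push_cast; ring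
          _ = ((-(n : ℤ) : ℤ) : ℂ) * (2 * (π : ℝ) * Complex.I) := by rw [hr]; push_cast; ring
      rw [h1, Complex.exp_int_mul_two_pi_mul_I]
    · have hr : k * ((2 * π * n) / |k|) = (((n:ℤ) : ℤ) : ℝ) * (2 * π) := by
        rw [abs_of_pos hpos]; push_cast; field_simp
      have h1 : Complex.I * k * (((2 * π * n) / |k| : ℝ) : ℂ)
          = (((n : ℤ) : ℤ) : ℂ) * (2 * (π : ℝ) * Complex.I) := by
        calc Complex.I * k * (((2 * π * n) / |k| : ℝ) : ℂ)
            = Complex.I * ((k * ((2 * π * n) / |k|) : ℝ) : ℂ) := by push_cast; ring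
          _ = (((n : ℤ) : ℤ) : ℂ) * (2 * (π : ℝ) * Complex.I) := by rw [hr]; push_cast; ring
      rw [h1, Complex.exp_int_mul_two_pi_mul_I]
end aux

open Set ComplexConjugate in
/-- the reflection coefficient of a Schrödinger operator with
Faddeev-class potential satisfies `|R| ≤ 1`. -/
theorem reflection_coefficient_le_one (V : ℝ → ℝ)
    (hV : Integrable (fun x => |V x| * (1 + |x|)))
    (k : ℝ) (hk : k ≠ 0) (T R : ℂ)
    (hTR : IsScatteringData V k T R) :
    ‖R‖ ≤ 1 := by
  obtain ⟨ψ, hC2, hODE, hbot, htop⟩ := hTR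
  obtain ⟨hd1, hd2, hdd⟩ := (contDiff_two_iff ψ).1 hC2
  set c : ℂ := Complex.I * k with hcdef
  have hcsq : c ^ 2 = -(k:ℂ)^2 := by rw [hcdef, mul_pow, Complex.I_sq]; ring
  have hcne : c ≠ 0 := mul_ne_zero Complex.I_ne_zero (Complex.ofReal_ne_zero.mpr hk)
  set f : ℝ → ℂ := fun x => deriv (deriv ψ) x + (k:ℂ)^2 * ψ x with hfdef
  have hfeq : ∀ x, f x = -((V x : ℂ) * ψ x) := fun x => by
    simp only [hfdef]; linear_combination - hODE x
  have hfcont : Continuous f := hdd.add (continuous_const.mul hd1.continuous)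
  have hexpC : ∀ a : ℂ, ContDiff ℝ 2 (fun x : ℝ => Complex.exp (a * x)) := fun a =>
    Complex.contDiff_exp.comp (contDiff_const.mul Complex.ofRealCLM.contDiff)
  -- asymptotic profiles
  set g : ℝ → ℂ := fun x => Complex.exp ((-c) * x) + R * Complex.exp (c * x) with hgdef
  set g1 : ℝ → ℂ := fun x => (-c) * Complex.exp ((-c) * x) + R * (c * Complex.exp (c * x))
    with hg1def
  have hgd : ∀ x, HasDerivAt g (g1 x) x := fun x =>
    (hasDerivAt_cexp_mul (-c) x).add ((hasDerivAt_cexp_mul c x).const_mul R)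
  have hg1d : ∀ x, HasDerivAt g1 ((k:ℂ)^2 * (- g x)) x := by
    intro x
    have h1 := ((hasDerivAt_cexp_mul (-c) x).const_mul (-c)).add
      (((hasDerivAt_cexp_mul c x).const_mul c).const_mul R)
    refine h1.congr_deriv ?_
    simp only [hgdef]
    linear_combination (-(-(Complex.exp ((-c) * x)) - R * Complex.exp (c * x))) * hcsq
  set gT : ℝ → ℂ := fun x => T * Complex.exp ((-c) * x) with hgTdef
  set gT1 : ℝ → ℂ := fun x => T * ((-c) * Complex.exp ((-c) * x)) with hgT1def
  have hgTd : ∀ x, HasDerivAt gT (gT1 x) x := fun x =>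
    (hasDerivAt_cexp_mul (-c) x).const_mul T
  have hgT1d : ∀ x, HasDerivAt gT1 ((k:ℂ)^2 * (- gT x)) x := by
    intro x
    have h1 := ((hasDerivAt_cexp_mul (-c) x).const_mul (-c)).const_mul T
    refine h1.congr_deriv ?_
    simp only [hgTdef]
    linear_combination (-(-(T * Complex.exp ((-c) * x)))) * hcsq
  have hgC2 : ContDiff ℝ 2 g := (hexpC (-c)).add (contDiff_const.mul (hexpC c))
  have hgTC2 : ContDiff ℝ 2 gT := contDiff_const.mul (hexpC (-c))
  have hφC2 : ContDiff ℝ 2 (fun x => ψ x - g x) := hC2.sub hgC2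
  have hφTC2 : ContDiff ℝ 2 (fun x => ψ x - gT x) := hC2.sub hgTC2
  have hφd : deriv (fun x => ψ x - g x) = fun x => deriv ψ x - g1 x := by
    funext x
    rw [deriv_fun_sub (hd1 x) (hgd x).differentiableAt, (hgd x).deriv]
  have hφTd : deriv (fun x => ψ x - gT x) = fun x => deriv ψ x - gT1 x := by
    funext x
    rw [deriv_fun_sub (hd1 x) (hgTd x).differentiableAt, (hgTd x).deriv]
  have hφdd : ∀ x, deriv (deriv (fun x => ψ x - g x)) x + (k:ℂ)^2 * ((fun x => ψ x - g x) x)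
      = f x := by
    intro x
    rw [hφd, deriv_fun_sub (hd2 x) (hg1d x).differentiableAt, (hg1d x).deriv]
    simp only [hfdef]
    ring
  have hφTdd : ∀ x, deriv (deriv (fun x => ψ x - gT x)) x + (k:ℂ)^2 * ((fun x => ψ x - gT x) x)
      = f x := by
    intro x
    rw [hφTd, deriv_fun_sub (hd2 x) (hgT1d x).differentiableAt, (hgT1d x).deriv]
    simp only [hfdef]
    ring
  -- asymptotic conditions in the (-c)*x form
  have htop' : Tendsto (fun x => ψ x - g x) atTop (nhds 0) := by
    simpa only [hgdef, neg_mul] using htop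
  have hbot' : Tendsto (fun x => ψ x - gT x) atBot (nhds 0) := by
    simpa only [hgTdef, neg_mul] using hbot
  -- global bound on ψ
  have hnorm_exp : ∀ (a : ℂ), a.re = 0 → ∀ x : ℝ, ‖Complex.exp (a * x)‖ = 1 := by
    intro a ha x
    simp [Complex.norm_exp, Complex.mul_re, ha]
  have hcre : c.re = 0 := by simp [hcdef]
  have hcre' : (-c).re = 0 := by simp [hcdef]
  have hev1 : ∀ᶠ x in atTop, ‖ψ x‖ ≤ 2 + ‖R‖ := by
    have h1 := (Metric.tendsto_nhds.mp htop') 1 one_pos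
    filter_upwards [h1] with x hx
    rw [dist_zero_right] at hx
    have h2 : ‖ψ x‖ ≤ ‖ψ x - g x‖ + ‖g x‖ := by
      simpa using norm_add_le (ψ x - g x) (g x)
    have h3 : ‖g x‖ ≤ 1 + ‖R‖ := by
      refine (norm_add_le _ _).trans ?_
      rw [norm_mul, hnorm_exp _ hcre' x, hnorm_exp _ hcre x, mul_one]
    linarith
  have hev2 : ∀ᶠ x in atBot, ‖ψ x‖ ≤ 1 + ‖T‖ := by
    have h1 := (Metric.tendsto_nhds.mp hbot') 1 one_pos
    filter_upwards [h1] with x hx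
    rw [dist_zero_right] at hx
    have h2 : ‖ψ x‖ ≤ ‖ψ x - gT x‖ + ‖gT x‖ := by
      simpa using norm_add_le (ψ x - gT x) (gT x)
    have h3 : ‖gT x‖ ≤ ‖T‖ := by
      rw [hgTdef]
      simp only []
      rw [norm_mul, hnorm_exp _ hcre' x, mul_one]
    linarith
  obtain ⟨A, hA⟩ := eventually_atTop.mp hev1
  obtain ⟨B, hB⟩ := eventually_atBot.mp hev2
  obtain ⟨C0, hC0⟩ := (isCompact_Icc (a := B) (b := A)).exists_bound_of_continuousOn
    hd1.continuous.continuousOn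
  set C : ℝ := max C0 (max (2 + ‖R‖) (1 + ‖T‖)) with hCdef
  have hCb : ∀ x : ℝ, ‖ψ x‖ ≤ C := by
    intro x
    rcases le_total x B with h | h
    · exact (hB x h).trans (le_max_of_le_right (le_max_right _ _))
    rcases le_total A x with h' | h'
    · exact (hA x h').trans (le_max_of_le_right (le_max_left _ _))
    · exact (hC0 x ⟨h, h'⟩).trans (le_max_left _ _)
  have hCnn : 0 ≤ C := le_trans (norm_nonneg (ψ 0)) (hCb 0)
  have hfint : Integrable f := by
    refine Integrable.mono' (hV.const_mul C) hfcont.aestronglyMeasurable (ae_of_all _ ?_)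
    intro x
    rw [hfeq x, norm_neg, norm_mul, Complex.norm_real]
    have h1 : ‖ψ x‖ ≤ C := hCb x
    have h2 : (0:ℝ) ≤ |V x| := abs_nonneg _
    have h3 : (1:ℝ) ≤ 1 + |x| := le_add_of_nonneg_right (abs_nonneg x)
    calc ‖V x‖ * ‖ψ x‖ ≤ |V x| * C := by
          rw [Real.norm_eq_abs]; exact mul_le_mul_of_nonneg_left h1 h2
      _ ≤ C * (|V x| * (1 + |x|)) := by nlinarith [mul_nonneg (mul_nonneg hCnn h2) (abs_nonneg x)]
  -- derivative asymptotics
  have hdtop : Tendsto (fun x => deriv ψ x - g1 x) atTop (nhds 0) := by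
    have h1 : Tendsto (deriv (fun x => ψ x - g x)) atTop (nhds 0) := by
      refine key_atTop hk hφC2 ?_ htop'
      have he : (fun x => deriv (deriv (fun x => ψ x - g x)) x
          + (k:ℂ)^2 * ((fun x => ψ x - g x) x)) = f := funext hφdd
      rw [he]
      exact hfint.integrableOn
    rwa [hφd] at h1
  have hdbot : Tendsto (fun x => deriv ψ x - gT1 x) atBot (nhds 0) := by
    have h1 : Tendsto (deriv (fun x => ψ x - gT x)) atBot (nhds 0) := by
      refine key_atBot hk hφTC2 ?_ hbot'
      have he : (fun x => deriv (deriv (fun x => ψ x - gT x)) x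
          + (k:ℂ)^2 * ((fun x => ψ x - gT x) x)) = f := funext hφTdd
      rw [he]
      exact hfint.integrableOn
    rwa [hφTd] at h1
  -- sequences
  obtain ⟨s, hs, hes0⟩ := exists_seq hk
  have hesc : ∀ n, Complex.exp (c * s n) = 1 := fun n => by rw [hcdef]; exact hes0 n
  have hesc' : ∀ n, Complex.exp ((-c) * s n) = 1 := fun n => by
    rw [neg_mul, Complex.exp_neg, hesc n, inv_one]
  set s' : ℕ → ℝ := fun n => -(s n) with hs'def
  have hs' : Tendsto s' atTop atBot := tendsto_neg_atTop_atBot.comp hs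
  have hesb : ∀ n, Complex.exp ((-c) * s' n) = 1 := fun n => by
    have : ((-c) * (s' n : ℝ) : ℂ) = c * (s n : ℝ) := by
      rw [hs'def]; push_cast; ring
    rw [this, hesc n]
  -- limits along sequences, at +∞
  have hψs : Tendsto (fun n => ψ (s n)) atTop (nhds (1 + R)) := by
    have h1 := htop'.comp hs
    have h2 : ∀ n, g (s n) = 1 + R := fun n => by
      simp only [hgdef, hesc n, hesc' n, mul_one]
    have h3 := h1.add_const (1 + R)
    have h4 : Tendsto (fun n => ψ (s n)) atTop (nhds (0 + (1 + R))) :=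
      h3.congr fun n => by simp only [Function.comp_apply]; rw [h2 n]; ring
    simpa using h4
  have hψ's : Tendsto (fun n => deriv ψ (s n)) atTop (nhds (c * (R - 1))) := by
    have h1 := hdtop.comp hs
    have h2 : ∀ n, g1 (s n) = c * (R - 1) := fun n => by
      simp only [hg1def, hesc n, hesc' n, mul_one]; ring
    have h3 := h1.add_const (c * (R - 1))
    have h4 : Tendsto (fun n => deriv ψ (s n)) atTop (nhds (0 + c * (R - 1))) :=
      h3.congr fun n => by simp only [Function.comp_apply]; rw [h2 n]; ring
    simpa using h4
  -- limits along sequences, at -∞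
  have hψb : Tendsto (fun n => ψ (s' n)) atTop (nhds T) := by
    have h1 := hbot'.comp hs'
    have h2 : ∀ n, gT (s' n) = T := fun n => by
      simp only [hgTdef, hesb n, mul_one]
    have h3 := h1.add_const T
    have h4 : Tendsto (fun n => ψ (s' n)) atTop (nhds (0 + T)) :=
      h3.congr fun n => by simp only [Function.comp_apply]; rw [h2 n]; ring
    simpa using h4
  have hψ'b : Tendsto (fun n => deriv ψ (s' n)) atTop (nhds (-(c * T))) := by
    have h1 := hdbot.comp hs'
    have h2 : ∀ n, gT1 (s' n) = -(c * T) := fun n => by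
      simp only [hgT1def, hesb n, mul_one]; ring
    have h3 := h1.add_const (-(c * T))
    have h4 : Tendsto (fun n => deriv ψ (s' n)) atTop (nhds (0 + -(c * T))) :=
      h3.congr fun n => by simp only [Function.comp_apply]; rw [h2 n]; ring
    simpa using h4
  -- Wronskian
  have hWconst := wronskian_const hC2 hODE
  have hconj_cont : Continuous (conj : ℂ → ℂ) := Complex.continuous_conj
  have hWtop : Tendsto (fun n => ψ (s n) * conj (deriv ψ (s n))
      - deriv ψ (s n) * conj (ψ (s n))) atTop
      (nhds ((1 + R) * conj (c * (R - 1)) - c * (R - 1) * conj (1 + R))) :=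
    (hψs.mul ((hconj_cont.tendsto _).comp hψ's)).sub
      (hψ's.mul ((hconj_cont.tendsto _).comp hψs))
  have hWbot : Tendsto (fun n => ψ (s' n) * conj (deriv ψ (s' n))
      - deriv ψ (s' n) * conj (ψ (s' n))) atTop
      (nhds (T * conj (-(c * T)) - (-(c * T)) * conj T)) :=
    (hψb.mul ((hconj_cont.tendsto _).comp hψ'b)).sub
      (hψ'b.mul ((hconj_cont.tendsto _).comp hψb))
  have hEqTop : ψ 0 * conj (deriv ψ 0) - deriv ψ 0 * conj (ψ 0)
      = (1 + R) * conj (c * (R - 1)) - c * (R - 1) * conj (1 + R) :=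
    tendsto_nhds_unique (tendsto_const_nhds.congr fun n => (hWconst (s n)).symm) hWtop
  have hEqBot : ψ 0 * conj (deriv ψ 0) - deriv ψ 0 * conj (ψ 0)
      = T * conj (-(c * T)) - (-(c * T)) * conj T :=
    tendsto_nhds_unique (tendsto_const_nhds.congr fun n => (hWconst (s' n)).symm) hWbot
  -- algebra
  have hconjc : conj c = -c := by
    rw [hcdef, map_mul, Complex.conj_I, Complex.conj_ofReal]; ring
  have h6 := hEqTop.symm.trans hEqBot
  simp only [map_mul, map_sub, map_add, map_one, map_neg, hconjc] at h6
  have hkey : (2 * c) * (1 - R * conj R) = (2 * c) * (T * conj T) := by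
    linear_combination h6
  have h7 : (1 : ℂ) - R * conj R = T * conj T :=
    mul_left_cancel₀ (mul_ne_zero two_ne_zero hcne) hkey
  rw [Complex.mul_conj, Complex.mul_conj] at h7
  have h8 : (1 : ℝ) - Complex.normSq R = Complex.normSq T := by exact_mod_cast h7
  have h9 : ‖R‖ ^ 2 ≤ 1 := by
    rw [Complex.sq_norm]; nlinarith [Complex.normSq_nonneg T]
  nlinarith [norm_nonneg R, h9]
end
end

section
/- Let N be a positive natural number and consider the Pöschl–Teller potential y(x) = sech²(x) with coupling χ = N(N+1). Then the set of negative eigenvalues of the Schrödinger operator -d²/dx² - N(N+1) sech²(x) (i.e., of H₁(χ·y)) is exactly {-n² : n ∈ ℕ, 1 ≤ n ≤ N}. -/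
open MeasureTheory Filter Real

noncomputable section

namespace PTaux
open Set

/-- tanh -/
def th (x : ℝ) : ℝ := Real.sinh x / Real.cosh x
/-- sech -/
def sch (x : ℝ) : ℝ := (Real.cosh x)⁻¹

lemma cosh_ne (x : ℝ) : Real.cosh x ≠ 0 := (Real.cosh_pos x).ne'

lemma sch_pos (x : ℝ) : 0 < sch x := inv_pos.2 (Real.cosh_pos x)

lemma sch_le_one (x : ℝ) : sch x ≤ 1 := by
  rw [sch, inv_le_one_iff₀]; right; exact Real.one_le_cosh x

lemma th_sq (x : ℝ) : th x ^ 2 = 1 - sch x ^ 2 := by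
  have h := Real.cosh_sq_sub_sinh_sq x
  have hc := cosh_ne x
  unfold th sch
  field_simp
  nlinarith [h]

lemma th_abs_le_one (x : ℝ) : |th x| ≤ 1 := by
  have h := th_sq x
  have h2 := (sch_pos x)
  nlinarith [abs_nonneg (th x), sq_abs (th x), sq_nonneg (|th x| - 1)]

lemma hasDerivAt_th (x : ℝ) : HasDerivAt th (sch x ^ 2) x := by
  have h := (Real.hasDerivAt_sinh x).div (Real.hasDerivAt_cosh x) (cosh_ne x)
  refine h.congr_deriv (Eq.symm ?_)
  have := Real.cosh_sq_sub_sinh_sq x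
  unfold sch
  field_simp
  nlinarith [this]

lemma hasDerivAt_sch (x : ℝ) : HasDerivAt sch (-(th x * sch x)) x := by
  have h := (Real.hasDerivAt_cosh x).inv (cosh_ne x)
  refine h.congr_deriv (Eq.symm ?_)
  rw [sch, th]
  field_simp

lemma th_strictMono : StrictMono th :=
  strictMono_of_deriv_pos fun x => by
    rw [(hasDerivAt_th x).deriv]; exact pow_pos (sch_pos x) 2

lemma contDiff_th {n : WithTop ℕ∞} : ContDiff ℝ n th := Real.contDiff_sinh.div Real.contDiff_cosh cosh_ne

lemma contDiff_sch {n : WithTop ℕ∞} : ContDiff ℝ n sch :=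
  Real.contDiff_cosh.inv cosh_ne




lemma not_int_top {f : ℝ → ℝ} (hI : Integrable f) (h : ∀ᶠ x in atTop, 1 ≤ f x) : False := by
  obtain ⟨R, hR⟩ := eventually_atTop.1 h
  have h1 : IntegrableOn (fun _ => (1:ℝ)) (Ioi R) := by
    refine MeasureTheory.Integrable.mono hI.integrableOn aestronglyMeasurable_const ?_
    rw [ae_restrict_iff' measurableSet_Ioi]
    filter_upwards with x hx
    have := hR x (le_of_lt hx)
    simp only [norm_one, Real.norm_eq_abs]
    exact le_trans this (le_abs_self _)
  rw [integrableOn_const_iff] at h1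
  rcases h1 with h1 | h1
  · norm_num at h1
  · rw [Real.volume_Ioi] at h1; exact (lt_irrefl _ h1).elim

lemma not_int_bot {f : ℝ → ℝ} (hI : Integrable f) (h : ∀ᶠ x in atBot, 1 ≤ f x) : False := by
  obtain ⟨R, hR⟩ := eventually_atBot.1 h
  have h1 : IntegrableOn (fun _ => (1:ℝ)) (Iio R) := by
    refine MeasureTheory.Integrable.mono hI.integrableOn aestronglyMeasurable_const ?_
    rw [ae_restrict_iff' measurableSet_Iio]
    filter_upwards with x hx
    have := hR x (le_of_lt hx)
    simp only [norm_one, Real.norm_eq_abs]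
    exact le_trans this (le_abs_self _)
  rw [integrableOn_const_iff] at h1
  rcases h1 with h1 | h1
  · norm_num at h1
  · rw [Real.volume_Iio] at h1; exact (lt_irrefl _ h1).elim

lemma integrable_of_partial_bounds {f : ℝ → ℝ} (hf : Continuous f) (h0 : ∀ x, 0 ≤ f x)
    {C : ℝ} (h1 : ∀ b : ℝ, ∫ x in (0:ℝ)..b, f x ≤ C) (h2 : ∀ a : ℝ, ∫ x in a..(0:ℝ), f x ≤ C) :
    Integrable f := by
  have hnorm : ∀ a b : ℝ, (∫ x in a..b, ‖f x‖) = ∫ x in a..b, f x := by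
    intro a b
    refine intervalIntegral.integral_congr fun x _ => ?_
    exact Real.norm_of_nonneg (h0 x)
  have hIoi : IntegrableOn f (Ioi (0:ℝ)) := by
    refine integrableOn_Ioi_of_intervalIntegral_norm_bounded C 0
      (b := fun i : ℝ => i) (l := atTop) (fun i => hf.integrableOn_Ioc) tendsto_id ?_
    filter_upwards with i
    rw [hnorm]; exact h1 i
  have hIic : IntegrableOn f (Iic (0:ℝ)) := by
    refine integrableOn_Iic_of_intervalIntegral_norm_bounded C 0
      (a := fun i : ℝ => -i) (l := atTop) (fun i => hf.integrableOn_Ioc) tendsto_neg_atTop_atBot ?_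
    filter_upwards with i
    rw [hnorm]; exact h2 (-i)
  have := hIic.union hIoi
  rwa [Set.Iic_union_Ioi, integrableOn_univ] at this

lemma integrable_sch_sq : Integrable (fun x => sch x ^ 2) := by
  have hc : Continuous fun x => sch x ^ 2 := (contDiff_sch (n := 1)).continuous.pow 2
  refine integrable_of_partial_bounds hc (fun x => sq_nonneg _) (C := 2) ?_ ?_
  · intro b
    have := intervalIntegral.integral_eq_sub_of_hasDerivAt
      (f := th) (f' := fun x => sch x ^ 2) (a := 0) (b := b)
      (fun x _ => hasDerivAt_th x) (hc.intervalIntegrable _ _)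
    rw [this]
    have h1 := th_abs_le_one b; have h2 := th_abs_le_one 0
    rw [abs_le] at h1 h2; linarith
  · intro a
    have := intervalIntegral.integral_eq_sub_of_hasDerivAt
      (f := th) (f' := fun x => sch x ^ 2) (a := a) (b := 0)
      (fun x _ => hasDerivAt_th x) (hc.intervalIntegrable _ _)
    rw [this]
    have h1 := th_abs_le_one a; have h2 := th_abs_le_one 0
    rw [abs_le] at h1 h2; linarith

lemma integrable_comp_neg {f : ℝ → ℝ} (hI : Integrable f) :
    Integrable fun x => f (-x) := by
  have h := (Measure.measurePreserving_neg (volume : Measure ℝ)).integrable_comp_emb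
    (MeasurableEquiv.neg ℝ).measurableEmbedding (g := f)
  exact h.2 hI


open Polynomial in
/-- the "dp" operation: derivative of `PT p n` is `PT (dp p n) n`. -/
def dp (p : Polynomial ℝ) (n : ℕ) : Polynomial ℝ :=
  (1 - X ^ 2) * derivative p - C (n : ℝ) * (X * p)

/-- basic family: polynomial in tanh times sech^n. -/
def PT (p : Polynomial ℝ) (n : ℕ) : ℝ → ℝ := fun x => p.eval (th x) * sch x ^ n

lemma PT_hasDerivAt (p : Polynomial ℝ) (n : ℕ) (x : ℝ) :
    HasDerivAt (PT p n) (PT (dp p n) n x) x := by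
  have h1 : HasDerivAt (fun y => p.eval (th y))
      (Polynomial.eval (th x) (Polynomial.derivative p) * sch x ^ 2) x :=
    (p.hasDerivAt (th x)).comp x (hasDerivAt_th x)
  have h2 : HasDerivAt (fun y => sch y ^ n) ((n : ℝ) * sch x ^ (n - 1) * (-(th x * sch x))) x :=
    (hasDerivAt_sch x).pow n
  have h := h1.mul h2
  refine h.congr_deriv (Eq.symm ?_)
  rw [PT, dp]
  simp only [Polynomial.eval_mul, Polynomial.eval_sub, Polynomial.eval_one, Polynomial.eval_pow,
    Polynomial.eval_X, Polynomial.eval_C]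
  rw [show (1 : ℝ) - th x ^ 2 = sch x ^ 2 by have := th_sq x; linarith]
  cases n with
  | zero => simp; ring
  | succ m =>
    have hh : sch x ^ m * sch x = sch x ^ (m + 1) := by rw [← pow_succ]
    rw [show m + 1 - 1 = m by omega]
    push_cast
    linear_combination (-((m:ℝ)+1) * th x * Polynomial.eval (th x) p) * hh

lemma contDiff_polyeval (p : Polynomial ℝ) {n : WithTop ℕ∞} :
    ContDiff ℝ n (fun x : ℝ => p.eval x) := by
  induction p using Polynomial.induction_on' with
  | add p q hp hq => simpa [Polynomial.eval_add] using hp.add hq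
  | monomial k a =>
    simp only [Polynomial.eval_monomial]
    exact contDiff_const.mul (contDiff_id.pow k)

lemma PT_contDiff (p : Polynomial ℝ) (n : ℕ) {k : WithTop ℕ∞} :
    ContDiff ℝ k (PT p n) :=
  ((contDiff_polyeval p).comp contDiff_th).mul (contDiff_sch.pow n)

lemma PT_continuous (p : Polynomial ℝ) (n : ℕ) : Continuous (PT p n) :=
  (PT_contDiff p n (k := 0)).continuous

lemma polyeval_bound (p : Polynomial ℝ) : ∃ M : ℝ, 0 ≤ M ∧ ∀ x : ℝ, |p.eval (th x)| ≤ M := by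
  obtain ⟨M, hM⟩ := (isCompact_Icc (a := (-1:ℝ)) (b := 1)).exists_bound_of_continuousOn
    ((contDiff_polyeval p (n := 1)).continuous.continuousOn)
  refine ⟨max M 0, le_max_right _ _, fun x => ?_⟩
  have hx : th x ∈ Icc (-1:ℝ) 1 := abs_le.1 (th_abs_le_one x)
  calc |p.eval (th x)| = ‖p.eval (th x)‖ := rfl
    _ ≤ M := hM _ hx
    _ ≤ max M 0 := le_max_left _ _

lemma PT_integrable_sq (p : Polynomial ℝ) {n : ℕ} (hn : 1 ≤ n) :
    Integrable (fun x => PT p n x ^ 2) := by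
  obtain ⟨M, hM0, hM⟩ := polyeval_bound p
  refine (integrable_sch_sq.const_mul (M ^ 2)).mono'
    (((PT_continuous p n).pow 2).aestronglyMeasurable) ?_
  filter_upwards with x
  have h1 : |PT p n x| ≤ M * sch x ^ n := by
    rw [PT, abs_mul, abs_pow, abs_of_pos (sch_pos x)]
    exact mul_le_mul_of_nonneg_right (hM x) (pow_nonneg (sch_pos x).le n)
  have h2 : sch x ^ n ≤ sch x := by
    calc sch x ^ n ≤ sch x ^ 1 :=
      pow_le_pow_of_le_one (sch_pos x).le (sch_le_one x) hn
    _ = sch x := pow_one _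
  have h3 : 0 < sch x := sch_pos x
  rw [Real.norm_eq_abs, abs_pow]
  calc |PT p n x| ^ 2 ≤ (M * sch x) ^ 2 := by
        apply pow_le_pow_left₀ (abs_nonneg _)
        exact le_trans h1 (mul_le_mul_of_nonneg_left h2 hM0)
    _ = M ^ 2 * sch x ^ 2 := by ring

lemma PT_ne_zero {p : Polynomial ℝ} (hp : p ≠ 0) (n : ℕ) : PT p n ≠ 0 := by
  intro h
  apply hp
  have hroots : {x : ℝ | Polynomial.IsRoot p x}.Infinite := by
    apply Set.Infinite.mono (s := Set.range th)
    · rintro _ ⟨x, rfl⟩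
      have := congrFun h x
      simp only [PT, Pi.zero_apply] at this
      have hs : sch x ^ n ≠ 0 := pow_ne_zero _ (sch_pos x).ne'
      exact (mul_eq_zero.1 this).resolve_right hs
    · exact Set.infinite_range_of_injective th_strictMono.injective
  exact Polynomial.eq_zero_of_infinite_isRoot p hroots

end PTaux
namespace PTaux2
open Set PTaux

lemma third_deriv_val {a κ : ℝ} {f f' f'' f''' : ℝ → ℝ}
    (h1 : ∀ x, HasDerivAt f (f' x) x)
    (h3 : ∀ x, HasDerivAt f'' (f''' x) x)
    (heq : ∀ x, f'' x = (κ ^ 2 - a * sch x ^ 2) * f x) (x : ℝ) :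
    f''' x = 2 * a * th x * sch x ^ 2 * f x + (κ ^ 2 - a * sch x ^ 2) * f' x := by
  have hfun : f'' = fun y => (κ ^ 2 - a * sch y ^ 2) * f y := funext heq
  have hs : HasDerivAt (fun y => κ ^ 2 - a * sch y ^ 2) (2 * a * th x * sch x ^ 2) x := by
    have h := (((hasDerivAt_sch x).pow 2).const_mul a).const_sub (κ ^ 2)
    refine h.congr_deriv (Eq.symm ?_)
    try simp
    try ring
  have hR : HasDerivAt (fun y => (κ ^ 2 - a * sch y ^ 2) * f y) _ x := hs.mul (h1 x)
  rw [← hfun] at hR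
  have := (h3 x).unique hR
  rw [this]; try ring

lemma ladder_down {m κ : ℝ} {f f' f'' f''' : ℝ → ℝ}
    (h1 : ∀ x, HasDerivAt f (f' x) x) (h2 : ∀ x, HasDerivAt f' (f'' x) x)
    (h3 : ∀ x, HasDerivAt f'' (f''' x) x)
    (heq : ∀ x, f'' x = (κ ^ 2 - m * (m + 1) * sch x ^ 2) * f x) :
    (∀ x, HasDerivAt (fun y => f' y + m * th y * f y)
        (f'' x + m * sch x ^ 2 * f x + m * th x * f' x) x) ∧
    (∀ x, HasDerivAt (fun y => f'' y + m * sch y ^ 2 * f y + m * th y * f' y)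
        ((κ ^ 2 - (m - 1) * m * sch x ^ 2) * (f' x + m * th x * f x)) x) := by
  have hf3 := third_deriv_val (a := m * (m + 1)) h1 h3 heq
  constructor
  · intro x
    have h := (h2 x).add (((hasDerivAt_th x).const_mul m).mul (h1 x))
    refine h.congr_deriv (Eq.symm ?_); try ring
  · intro x
    have hb : HasDerivAt (fun y => m * sch y ^ 2 * f y)
        (m * (2 * sch x * -(th x * sch x)) * f x + m * sch x ^ 2 * f' x) x := by
      have := ((((hasDerivAt_sch x).pow 2)).const_mul m).mul (h1 x)
      refine this.congr_deriv (Eq.symm ?_)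
      try simp
      try ring
    have hc : HasDerivAt (fun y => m * th y * f' y)
        (m * sch x ^ 2 * f' x + m * th x * f'' x) x := by
      have := ((hasDerivAt_th x).const_mul m).mul (h2 x)
      refine this.congr_deriv (Eq.symm ?_); try ring
    have h := ((h3 x).add hb).add hc
    refine h.congr_deriv (Eq.symm ?_)
    rw [hf3 x, heq x]
    ring

lemma ladder_up {m κ : ℝ} {f f' f'' f''' : ℝ → ℝ}
    (h1 : ∀ x, HasDerivAt f (f' x) x) (h2 : ∀ x, HasDerivAt f' (f'' x) x)
    (h3 : ∀ x, HasDerivAt f'' (f''' x) x)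
    (heq : ∀ x, f'' x = (κ ^ 2 - (m - 1) * m * sch x ^ 2) * f x) :
    (∀ x, HasDerivAt (fun y => -f' y + m * th y * f y)
        (-f'' x + m * sch x ^ 2 * f x + m * th x * f' x) x) ∧
    (∀ x, HasDerivAt (fun y => -f'' y + m * sch y ^ 2 * f y + m * th y * f' y)
        ((κ ^ 2 - m * (m + 1) * sch x ^ 2) * (-f' x + m * th x * f x)) x) := by
  have hf3 := third_deriv_val (a := (m - 1) * m) h1 h3 heq
  constructor
  · intro x
    have h := (h2 x).neg.add (((hasDerivAt_th x).const_mul m).mul (h1 x))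
    refine h.congr_deriv (Eq.symm ?_); try ring
  · intro x
    have hb : HasDerivAt (fun y => m * sch y ^ 2 * f y)
        (m * (2 * sch x * -(th x * sch x)) * f x + m * sch x ^ 2 * f' x) x := by
      have := ((((hasDerivAt_sch x).pow 2)).const_mul m).mul (h1 x)
      refine this.congr_deriv (Eq.symm ?_)
      try simp
      try ring
    have hc : HasDerivAt (fun y => m * th y * f' y)
        (m * sch x ^ 2 * f' x + m * th x * f'' x) x := by
      have := ((hasDerivAt_th x).const_mul m).mul (h2 x)
      refine this.congr_deriv (Eq.symm ?_); try ring
    have h := ((h3 x).neg.add hb).add hc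
    refine h.congr_deriv (Eq.symm ?_)
    rw [hf3 x, heq x]
    ring

end PTaux2
namespace PTaux3
open Set PTaux Filter MeasureTheory Real

lemma phi_zero_case {m κ : ℝ} (hm : 0 < m) (hκ : 0 < κ) {ψ ψ' : ℝ → ℝ}
    (h1 : ∀ x, HasDerivAt ψ (ψ' x) x)
    (h2 : ∀ x, HasDerivAt ψ' ((κ ^ 2 - m * (m + 1) * sch x ^ 2) * ψ x) x)
    (hψ : ψ ≠ 0) (hc : ∀ x, ψ' x + m * th x * ψ x = 0) : κ = m := by
  have hfun : ψ' = fun y => -(m * th y * ψ y) := funext fun x => by linarith [hc x]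
  have hder : ∀ x, HasDerivAt ψ' (-(m * sch x ^ 2 * ψ x + m * th x * ψ' x)) x := by
    intro x
    have h : HasDerivAt (fun y => -(m * th y * ψ y)) _ x := (((hasDerivAt_th x).const_mul m).mul (h1 x)).neg
    rw [← hfun] at h
    refine h.congr_deriv (Eq.symm ?_); try ring
  have key : ∀ x, (κ ^ 2 - m * (m + 1) * sch x ^ 2) * ψ x
      = -(m * sch x ^ 2 * ψ x + m * th x * ψ' x) := fun x => (h2 x).unique (hder x)
  obtain ⟨x₀, hx₀⟩ := Function.ne_iff.1 hψ
  have hk := key x₀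
  have hc0 := hc x₀
  have hts := th_sq x₀
  have hzero : (κ ^ 2 - m ^ 2) * ψ x₀ = 0 := by
    linear_combination hk - m * th x₀ * hc0 + m ^ 2 * ψ x₀ * hts
  have hψ0 : ψ x₀ ≠ 0 := hx₀
  have : κ ^ 2 = m ^ 2 := by
    rcases mul_eq_zero.1 hzero with h | h
    · linarith
    · exact absurd h hψ0
  nlinarith [this]

lemma no_eig_free {κ : ℝ} (hκ : 0 < κ) {ψ ψ' : ℝ → ℝ}
    (h1 : ∀ x, HasDerivAt ψ (ψ' x) x) (h2 : ∀ x, HasDerivAt ψ' (κ ^ 2 * ψ x) x)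
    (hI : Integrable (fun x => ψ x ^ 2)) : ψ = 0 := by
  set g : ℝ → ℝ := fun x => Real.exp (-(κ * x)) * (ψ' x + κ * ψ x) with hg_def
  have hexp : ∀ x : ℝ, HasDerivAt (fun y => Real.exp (-(κ * y))) (Real.exp (-(κ * x)) * (-κ)) x := by
    intro x
    have ha : HasDerivAt (fun y : ℝ => -(κ * y)) (-κ) x := by
      simpa using ((hasDerivAt_id x).const_mul (-κ))
    exact ha.exp
  have hg : ∀ x, HasDerivAt g 0 x := by
    intro x
    have hsum := (h2 x).add ((h1 x).const_mul κ)
    have h := (hexp x).mul hsum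
    refine h.congr_deriv (Eq.symm ?_); simp only [Pi.add_apply]; ring
  have hgc : ∀ x, g x = g 0 :=
    fun x => is_const_of_deriv_eq_zero (fun y => (hg y).differentiableAt) (fun y => (hg y).deriv) x 0
  set c : ℝ := g 0 with hc_def
  set d : ℝ := ψ 0 - c / (2 * κ) with hd_def
  -- the function exp(κx)ψ(x) - c/(2κ) exp(2κx) is constant, equal to d
  have hh : ∀ x, HasDerivAt
      (fun y => Real.exp (κ * y) * ψ y - c / (2 * κ) * Real.exp (2 * κ * y)) 0 x := by
    intro x
    have hb : HasDerivAt (fun y : ℝ => κ * y) κ x := by simpa using (hasDerivAt_id x).const_mul κ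
    have he1 := (hb.exp).mul (h1 x)
    have hb2 : HasDerivAt (fun y : ℝ => 2 * κ * y) (2 * κ) x := by
      simpa using (hasDerivAt_id x).const_mul (2 * κ)
    have he2 := (hb2.exp).const_mul (c / (2 * κ))
    have he2' : HasDerivAt (fun y => c / (2 * κ) * Real.exp (2 * κ * y))
        (c * Real.exp (2 * κ * x)) x := by
      refine he2.congr_deriv (Eq.symm ?_)
      field_simp
    have h := he1.sub he2'
    refine h.congr_deriv (Eq.symm ?_)
    have hcx : Real.exp (-(κ * x)) * (ψ' x + κ * ψ x) = c := (hgc x)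
    have hmul : Real.exp (κ * x) * Real.exp (-(κ * x)) = 1 := by
      rw [← Real.exp_add]; ring_nf; exact Real.exp_zero
    have hmul2 : Real.exp (2 * κ * x) = Real.exp (κ * x) * Real.exp (κ * x) := by
      rw [← Real.exp_add]; ring_nf
    have key : Real.exp (κ * x) * ψ' x + κ * Real.exp (κ * x) * ψ x
        = c * (Real.exp (κ * x) * Real.exp (κ * x)) := by
      linear_combination (Real.exp (κ * x) * Real.exp (κ * x)) * hcx
        - Real.exp (κ * x) * (ψ' x + κ * ψ x) * hmul
    rw [hmul2]
    linear_combination -key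
  have hhc : ∀ x, Real.exp (κ * x) * ψ x - c / (2 * κ) * Real.exp (2 * κ * x)
      = Real.exp (κ * 0) * ψ 0 - c / (2 * κ) * Real.exp (2 * κ * 0) :=
    fun x => is_const_of_deriv_eq_zero (fun y => (hh y).differentiableAt)
      (fun y => (hh y).deriv) x 0
  have hform : ∀ x, ψ x = c / (2 * κ) * Real.exp (κ * x) + d * Real.exp (-(κ * x)) := by
    intro x
    have hx := hhc x
    simp only [mul_zero, Real.exp_zero, one_mul] at hx
    have hne : Real.exp (κ * x) ≠ 0 := Real.exp_ne_zero _
    have hmul : Real.exp (κ * x) * Real.exp (-(κ * x)) = 1 := by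
      rw [← Real.exp_add]; ring_nf; exact Real.exp_zero
    have hmul2 : Real.exp (2 * κ * x) = Real.exp (κ * x) * Real.exp (κ * x) := by
      rw [← Real.exp_add]; ring_nf
    have hkey : Real.exp (κ * x) * ψ x
        = c / (2 * κ) * Real.exp (κ * x) * Real.exp (κ * x) + d := by
      rw [hd_def]; rw [hmul2] at hx; linarith
    linear_combination Real.exp (-(κ * x)) * hkey
      - (ψ x - c / (2 * κ) * Real.exp (κ * x)) * hmul
  have hκx_top : Tendsto (fun x : ℝ => Real.exp (κ * x)) atTop atTop :=
    Real.tendsto_exp_atTop.comp (Tendsto.const_mul_atTop hκ tendsto_id)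
  have hc0 : c = 0 := by
    by_contra hc0
    have hA : 0 < |c / (2 * κ)| := by
      apply abs_pos.2; intro h; apply hc0
      field_simp at h; simpa using h
    refine not_int_top hI ?_
    have h1' : ∀ᶠ x : ℝ in atTop, (|d| + 1) / |c / (2 * κ)| ≤ Real.exp (κ * x) :=
      hκx_top.eventually_ge_atTop _
    filter_upwards [h1', eventually_ge_atTop (0:ℝ)] with x hx hx0
    have hbound : |c / (2 * κ)| * Real.exp (κ * x) - |d| * Real.exp (-(κ * x)) ≤ |ψ x| := by
      rw [hform x]
      have := abs_sub_abs_le_abs_sub (c / (2 * κ) * Real.exp (κ * x)) (-(d * Real.exp (-(κ * x))))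
      simp only [abs_mul, abs_neg, sub_neg_eq_add, Real.abs_exp] at this ⊢
      linarith [this]
    have hexp1 : Real.exp (-(κ * x)) ≤ 1 := by
      rw [Real.exp_le_one_iff]; nlinarith
    have h1le : 1 ≤ |ψ x| := by
      have : (|d| + 1) ≤ |c / (2 * κ)| * Real.exp (κ * x) := by
        rw [div_le_iff₀ hA] at hx; linarith
      nlinarith [abs_nonneg d, Real.exp_pos (-(κ * x))]
    nlinarith [sq_abs (ψ x), h1le, abs_nonneg (ψ x)]
  have hd0 : d = 0 := by
    by_contra hd0
    have hA : 0 < |d| := abs_pos.2 hd0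
    refine not_int_bot hI ?_
    have hbot : Tendsto (fun x : ℝ => Real.exp (-(κ * x))) atBot atTop := by
      apply Real.tendsto_exp_atTop.comp
      have : Tendsto (fun x : ℝ => κ * x) atBot atBot := Tendsto.const_mul_atBot hκ tendsto_id
      exact tendsto_neg_atBot_atTop.comp this
    have h1' : ∀ᶠ x : ℝ in atBot, (1:ℝ) / |d| ≤ Real.exp (-(κ * x)) :=
      hbot.eventually_ge_atTop _
    filter_upwards [h1'] with x hx
    have hψx : ψ x = d * Real.exp (-(κ * x)) := by rw [hform x, hc0]; ring
    have h1le : 1 ≤ |ψ x| := by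
      rw [hψx, abs_mul, Real.abs_exp]
      rw [div_le_iff₀ hA] at hx; nlinarith
    nlinarith [sq_abs (ψ x), h1le, abs_nonneg (ψ x)]
  funext x
  rw [hform x, hc0, hd0]
  simp

end PTaux3
namespace PTaux4
open PTaux PTaux3 Filter MeasureTheory Set

lemma bound_pos {ψ ψ' W : ℝ → ℝ} {C : ℝ}
    (hd : ∀ x, HasDerivAt ψ (ψ' x) x) (hd' : ∀ x, HasDerivAt ψ' (W x * ψ x) x)
    (hWc : Continuous W) (hC : ∀ x, |W x| ≤ C)
    (hI : Integrable (fun x => ψ x ^ 2)) :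
    ∃ B, ∀ b : ℝ, ∫ x in (0:ℝ)..b, ψ' x ^ 2 ≤ B := by
  have hψc : Continuous ψ := by
    exact continuous_iff_continuousAt.2 fun x => (hd x).continuousAt
  have hψ'c : Continuous ψ' := by
    exact continuous_iff_continuousAt.2 fun x => (hd' x).continuousAt
  have hWψc : Continuous fun x => W x * ψ x := hWc.mul hψc
  have hC0 : 0 ≤ C := le_trans (abs_nonneg _) (hC 0)
  have hIBP : ∀ b : ℝ, (∫ x in (0:ℝ)..b, (ψ' x * ψ' x + ψ x * (W x * ψ x)))
      = ψ b * ψ' b - ψ 0 * ψ' 0 := fun b =>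
    intervalIntegral.integral_deriv_mul_eq_sub (fun x _ => hd x) (fun x _ => hd' x)
      (hψ'c.intervalIntegrable _ _) (hWψc.intervalIntegrable _ _)
  set J := ∫ x : ℝ, ψ x ^ 2 with hJdef
  have habs : ∀ a b : ℝ, |∫ x in a..b, ψ x * (W x * ψ x)| ≤ C * J := by
    intro a b
    have hpt : ∀ x, ‖ψ x * (W x * ψ x)‖ ≤ C * ψ x ^ 2 := by
      intro x
      rw [Real.norm_eq_abs, abs_mul, abs_mul]
      calc |ψ x| * (|W x| * |ψ x|) = |W x| * (|ψ x| * |ψ x|) := by ring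
        _ ≤ C * (|ψ x| * |ψ x|) :=
          mul_le_mul_of_nonneg_right (hC x) (mul_nonneg (abs_nonneg _) (abs_nonneg _))
        _ = C * ψ x ^ 2 := by rw [← sq_abs]; ring
    calc |∫ x in a..b, ψ x * (W x * ψ x)| ≤ ∫ x in Set.uIoc a b, ‖ψ x * (W x * ψ x)‖ := by
          rw [← Real.norm_eq_abs]
          exact intervalIntegral.norm_integral_le_integral_norm_uIoc
      _ ≤ ∫ x in Set.uIoc a b, C * ψ x ^ 2 := by
          refine setIntegral_mono_on ?_ ?_ measurableSet_uIoc fun x _ => hpt x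
          · exact (hψc.mul hWψc).norm.integrableOn_uIoc
          · exact (hI.const_mul C).integrableOn
      _ = C * ∫ x in Set.uIoc a b, ψ x ^ 2 := by rw [integral_const_mul]
      _ ≤ C * J := by
          refine mul_le_mul_of_nonneg_left ?_ hC0
          exact setIntegral_le_integral hI (Eventually.of_forall fun x => sq_nonneg _)
  by_contra hcon
  push_neg at hcon
  set F : ℝ → ℝ := fun b => ∫ x in (0:ℝ)..b, ψ' x ^ 2 with hFdef
  have hψ'2int : ∀ a b : ℝ, IntervalIntegrable (fun x => ψ' x ^ 2) volume a b :=
    fun a b => (hψ'c.pow 2).intervalIntegrable _ _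
  have hFmono : ∀ b b' : ℝ, b ≤ b' → F b ≤ F b' := by
    intro b b' hbb
    have hadd := intervalIntegral.integral_add_adjacent_intervals
      (a := (0:ℝ)) (b := b) (c := b') (hψ'2int 0 b) (hψ'2int b b')
    have hnn : 0 ≤ ∫ x in b..b', ψ' x ^ 2 :=
      intervalIntegral.integral_nonneg hbb fun x _ => sq_nonneg _
    simp only [hFdef]
    linarith [hadd]
  have hFtop : Tendsto F atTop atTop := by
    rw [tendsto_atTop]
    intro M
    obtain ⟨b₀, hb₀⟩ := hcon M
    filter_upwards [eventually_ge_atTop b₀] with b hb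
    exact le_trans hb₀.le (hFmono _ _ hb)
  have hu : ∀ b : ℝ, F b + (ψ 0 * ψ' 0 - C * J) ≤ ψ b * ψ' b := by
    intro b
    have h1 := hIBP b
    have hsplit : (∫ x in (0:ℝ)..b, (ψ' x * ψ' x + ψ x * (W x * ψ x)))
        = (∫ x in (0:ℝ)..b, ψ' x * ψ' x) + ∫ x in (0:ℝ)..b, ψ x * (W x * ψ x) :=
      intervalIntegral.integral_add ((hψ'c.mul hψ'c).intervalIntegrable _ _)
        ((hψc.mul hWψc).intervalIntegrable _ _)
    have hFb : F b = ∫ x in (0:ℝ)..b, ψ' x * ψ' x := by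
      simp only [hFdef]
      exact intervalIntegral.integral_congr fun x _ => sq (ψ' x) ▸ by ring
    have habs' := (abs_le.1 (habs 0 b)).1
    rw [hFb]
    linarith [h1, hsplit, habs']
  have huTop : Tendsto (fun b => ψ b * ψ' b) atTop atTop := by
    refine tendsto_atTop_mono hu ?_
    exact tendsto_atTop_add_const_right _ _ hFtop
  obtain ⟨b₀, hb₀⟩ := eventually_atTop.1 (huTop.eventually_ge_atTop 1)
  have hsq : ∀ b : ℝ, b₀ ≤ b → ψ b₀ ^ 2 + 2 * (b - b₀) ≤ ψ b ^ 2 := by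
    intro b hb
    have hftc : (∫ x in b₀..b, 2 * ψ x * ψ' x) = ψ b ^ 2 - ψ b₀ ^ 2 := by
      apply intervalIntegral.integral_eq_sub_of_hasDerivAt
      · intro x _
        have := (hd x).pow 2
        refine this.congr_deriv (Eq.symm ?_)
        try simp
        try ring
      · exact (((continuous_const.mul hψc).mul hψ'c)).intervalIntegrable _ _
    have hmono : (∫ x in b₀..b, (2:ℝ)) ≤ ∫ x in b₀..b, 2 * ψ x * ψ' x := by
      apply intervalIntegral.integral_mono_on hb intervalIntegrable_const
        (((continuous_const.mul hψc).mul hψ'c).intervalIntegrable _ _)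
      intro x hx
      have := hb₀ x hx.1
      show (2:ℝ) ≤ 2 * ψ x * ψ' x
      linarith
    rw [intervalIntegral.integral_const, smul_eq_mul] at hmono
    linarith [hftc, hmono]
  have hev2 : ∀ᶠ b in atTop, 1 ≤ ψ b ^ 2 := by
    filter_upwards [eventually_ge_atTop (b₀ + 1)] with b hb
    have := hsq b (by linarith)
    nlinarith [sq_nonneg (ψ b₀)]
  exact not_int_top hI hev2

lemma deriv_sq_integrable {ψ ψ' W : ℝ → ℝ} {C : ℝ}
    (hd : ∀ x, HasDerivAt ψ (ψ' x) x) (hd' : ∀ x, HasDerivAt ψ' (W x * ψ x) x)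
    (hWc : Continuous W) (hC : ∀ x, |W x| ≤ C)
    (hI : Integrable (fun x => ψ x ^ 2)) :
    Integrable (fun x => ψ' x ^ 2) := by
  have hψ'c : Continuous ψ' := continuous_iff_continuousAt.2 fun x => (hd' x).continuousAt
  obtain ⟨B1, hB1⟩ := bound_pos hd hd' hWc hC hI
  have hdχ : ∀ x : ℝ, HasDerivAt (fun y => ψ (-y)) (-ψ' (-x)) x := by
    intro x
    have h := (hd (-x)).comp x (hasDerivAt_neg x)
    exact h.congr_deriv (by ring)
  have hdχ' : ∀ x : ℝ, HasDerivAt (fun y => -ψ' (-y)) (W (-x) * ψ (-x)) x := by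
    intro x
    have h := ((hd' (-x)).comp x (hasDerivAt_neg x)).neg
    refine h.congr_deriv (Eq.symm ?_)
    · ring
  have hI2 : Integrable fun x : ℝ => ψ (-x) ^ 2 := integrable_comp_neg hI
  obtain ⟨B2, hB2⟩ := bound_pos (ψ := fun y => ψ (-y)) (ψ' := fun y => -ψ' (-y))
    (W := fun y => W (-y)) hdχ hdχ' (hWc.comp continuous_neg) (fun x => hC (-x)) hI2
  refine integrable_of_partial_bounds (hψ'c.pow 2) (fun x => sq_nonneg _)
    (C := max B1 B2) (fun b => le_trans (hB1 b) (le_max_left _ _)) ?_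
  intro a
  have hcomp : (∫ x in (0:ℝ)..(-a), (fun y => -ψ' (-y)) x ^ 2) = ∫ x in a..(0:ℝ), ψ' x ^ 2 := by
    have h := intervalIntegral.integral_comp_neg (a := (0:ℝ)) (b := -a) (f := fun x => ψ' x ^ 2)
    simpa using h
  rw [← hcomp]
  exact le_trans (hB2 (-a)) (le_max_right _ _)

end PTaux4
namespace PTaux5
open PTaux PTaux2 PTaux3 PTaux4 Filter MeasureTheory Set

lemma contDiff2_derivs {ψ : ℝ → ℝ} (h : ContDiff ℝ 2 ψ) :
    (∀ x, HasDerivAt ψ (deriv ψ x) x) ∧ (∀ x, HasDerivAt (deriv ψ) (deriv (deriv ψ) x) x)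
      ∧ ContDiff ℝ 1 (deriv ψ) := by
  have h2 : ContDiff ℝ (1 + 1) ψ := by
    rwa [show ((1:WithTop ℕ∞) + 1) = 2 from by norm_num]
  rw [contDiff_succ_iff_deriv] at h2
  obtain ⟨hdiff, -, hd1⟩ := h2
  exact ⟨fun x => (hdiff x).hasDerivAt,
    fun x => ((hd1.differentiable one_ne_zero) x).hasDerivAt, hd1⟩

lemma forward (M : ℕ) : ∀ κ : ℝ, 0 < κ →
    (∃ ψ : ℝ → ℝ, ψ ≠ 0 ∧ ContDiff ℝ 2 ψ ∧ Integrable (fun x => ψ x ^ 2) ∧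
      ∀ x, deriv (deriv ψ) x = (κ ^ 2 - ((M:ℝ) * ((M:ℝ) + 1)) * sch x ^ 2) * ψ x) →
    ∃ n : ℕ, 1 ≤ n ∧ n ≤ M ∧ κ = n := by
  induction M with
  | zero =>
    rintro κ hκ ⟨ψ, hne, hsm, hI, heq⟩
    exfalso
    obtain ⟨h1, h2, -⟩ := contDiff2_derivs hsm
    have h2' : ∀ x, HasDerivAt (deriv ψ) (κ ^ 2 * ψ x) x := by
      intro x
      have := h2 x
      rw [heq x] at this
      refine this.congr_deriv (Eq.symm ?_)
      push_cast
      ring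
    exact hne (no_eig_free hκ h1 h2' hI)
  | succ M IH =>
    rintro κ hκ ⟨ψ, hne, hsm, hI, heq⟩
    set m : ℝ := (M : ℝ) + 1 with hm_def
    have hm : 0 < m := by positivity
    obtain ⟨h1, h2, hd1C⟩ := contDiff2_derivs hsm
    have hψc : Continuous ψ := hsm.continuous
    have hψ'c : Continuous (deriv ψ) := (hd1C.differentiable one_ne_zero).continuous
    have heq' : ∀ x, deriv (deriv ψ) x = (κ ^ 2 - m * (m + 1) * sch x ^ 2) * ψ x := by
      intro x
      rw [heq x]
      push_cast [hm_def]
      ring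
    have h2' : ∀ x, HasDerivAt (deriv ψ) ((κ ^ 2 - m * (m + 1) * sch x ^ 2) * ψ x) x :=
      fun x => heq' x ▸ h2 x
    by_cases hc : ∀ x, deriv ψ x + m * th x * ψ x = 0
    · refine ⟨M + 1, by omega, le_refl _, ?_⟩
      have := phi_zero_case hm hκ h1 h2' hne hc
      rw [this, hm_def]
      push_cast
      ring
    · -- lower the eigenfunction
      set f'' : ℝ → ℝ := fun x => (κ ^ 2 - m * (m + 1) * sch x ^ 2) * ψ x with hf''_def
      have h3 : ∀ x, HasDerivAt f''
          (2 * (m * (m + 1)) * th x * sch x ^ 2 * ψ x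
            + (κ ^ 2 - m * (m + 1) * sch x ^ 2) * deriv ψ x) x := by
        intro x
        have hs : HasDerivAt (fun y => κ ^ 2 - m * (m + 1) * sch y ^ 2)
            (2 * (m * (m + 1)) * th x * sch x ^ 2) x := by
          have h := (((hasDerivAt_sch x).pow 2).const_mul (m * (m + 1))).const_sub (κ ^ 2)
          refine h.congr_deriv (Eq.symm ?_)
          simp
          ring
        exact hs.mul (h1 x)
      obtain ⟨hφ1, hφ2⟩ := ladder_down (m := m) (κ := κ) h1 h2' h3 (fun x => rfl)
      set φ : ℝ → ℝ := fun y => deriv ψ y + m * th y * ψ y with hφ_def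
      set φ'f : ℝ → ℝ := fun x => f'' x + m * sch x ^ 2 * ψ x + m * th x * deriv ψ x with hφ'_def
      have hφdiff : Differentiable ℝ φ := fun x => (hφ1 x).differentiableAt
      have hderivφ : deriv φ = φ'f := funext fun x => (hφ1 x).deriv
      have hφc : Continuous φ := hφdiff.continuous
      -- φ is not zero
      have hφne : φ ≠ 0 := by
        push_neg at hc
        obtain ⟨x₀, hx₀⟩ := hc
        intro h0
        exact hx₀ (congrFun h0 x₀)
      -- φ is C²
      have hφ'C1 : ContDiff ℝ 1 φ'f := by
        have c1 : ContDiff ℝ 1 f'' := by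
          refine ContDiff.mul ?_ (hsm.of_le one_le_two)
          exact contDiff_const.sub (contDiff_const.mul (contDiff_sch.pow 2))
        have c2 : ContDiff ℝ 1 fun x => m * sch x ^ 2 * ψ x :=
          (contDiff_const.mul (contDiff_sch.pow 2)).mul (hsm.of_le one_le_two)
        have c3 : ContDiff ℝ 1 fun x => m * th x * deriv ψ x :=
          (contDiff_const.mul contDiff_th).mul hd1C
        exact (c1.add c2).add c3
      have hφsm : ContDiff ℝ 2 φ := by
        rw [show ((2:WithTop ℕ∞)) = 1 + 1 from by norm_num, contDiff_succ_iff_deriv]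
        refine ⟨hφdiff, by simp, ?_⟩
        rw [hderivφ]
        exact hφ'C1
      -- φ² is integrable
      have hWb : ∀ x, |κ ^ 2 - m * (m + 1) * sch x ^ 2| ≤ κ ^ 2 + m * (m + 1) := by
        intro x
        rw [abs_le]
        have hs1 : 0 < sch x := sch_pos x
        have hs2 : sch x ≤ 1 := sch_le_one x
        have h3 : (0:ℝ) ≤ m * (m + 1) := by positivity
        have h4 : sch x ^ 2 ≤ 1 := by nlinarith
        have h5 := mul_le_mul_of_nonneg_left h4 h3
        have h6 : 0 ≤ m * (m + 1) * sch x ^ 2 := by positivity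
        constructor <;> nlinarith [sq_nonneg κ]
      have hd'int : Integrable fun x => deriv ψ x ^ 2 :=
        deriv_sq_integrable h1 h2'
          (contDiff_const.sub (contDiff_const.mul ((contDiff_sch (n := 1)).pow 2))).continuous
          hWb hI
      have hφI : Integrable fun x => φ x ^ 2 := by
        refine ((hd'int.const_mul 2).add (hI.const_mul (2 * m ^ 2))).mono'
          ((hφc.pow 2).aestronglyMeasurable) ?_
        filter_upwards with x
        rw [Real.norm_eq_abs, abs_of_nonneg (sq_nonneg _)]
        have hth := th_sq x
        have hs1 : 0 < sch x := sch_pos x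
        have hs2 : sch x ≤ 1 := sch_le_one x
        simp only [hφ_def, Pi.add_apply]
        have ht1 : th x ^ 2 ≤ 1 := by nlinarith
        have ht2 := mul_le_mul_of_nonneg_left ht1
          (mul_nonneg (sq_nonneg m) (sq_nonneg (ψ x)))
        nlinarith [sq_nonneg (deriv ψ x - m * th x * ψ x), sq_nonneg (ψ x)]
      -- φ satisfies the equation at level M
      have hφeq : ∀ x, deriv (deriv φ) x
          = (κ ^ 2 - ((M:ℝ) * ((M:ℝ) + 1)) * sch x ^ 2) * φ x := by
        intro x
        rw [hderivφ, (hφ2 x).deriv]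
        push_cast [hm_def]
        ring
      obtain ⟨n, hn1, hn2, hn3⟩ := IH κ hκ ⟨φ, hφne, hφsm, hφI, hφeq⟩
      exact ⟨n, hn1, by omega, hn3⟩

end PTaux5
namespace PTaux6
open PTaux PTaux2 PTaux5 Filter MeasureTheory Set Polynomial

lemma sat_one (n : ℕ) : ∀ x, PT (dp (dp 1 n) n) n x
    = ((n:ℝ) ^ 2 - ((n:ℝ) * ((n:ℝ) + 1)) * sch x ^ 2) * PT 1 n x := by
  intro x
  have h := th_sq x
  simp only [PT, dp]
  simp only [Polynomial.derivative_sub, Polynomial.derivative_mul, Polynomial.derivative_one,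
    Polynomial.derivative_C, Polynomial.derivative_X, Polynomial.derivative_pow,
    Polynomial.eval_sub, Polynomial.eval_mul, Polynomial.eval_one, Polynomial.eval_pow,
    Polynomial.eval_X, Polynomial.eval_C, Polynomial.eval_add, Polynomial.derivative_zero,
    Polynomial.eval_zero]
  ring_nf
  linear_combination ((n:ℝ) + (n:ℝ)^2) * sch x ^ n * h

lemma reverse (n : ℕ) (hn : 1 ≤ n) : ∀ M : ℕ, n ≤ M →
    ∃ p : Polynomial ℝ, p ≠ 0 ∧
      ∀ x, PT (dp (dp p n) n) n x
        = ((n:ℝ) ^ 2 - ((M:ℝ) * ((M:ℝ) + 1)) * sch x ^ 2) * PT p n x := by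
  intro M
  induction M with
  | zero => intro h; omega
  | succ M IH =>
    intro hle
    by_cases hcase : n = M + 1
    · refine ⟨1, one_ne_zero, ?_⟩
      intro x
      have h := sat_one n x
      rw [h, hcase]
    · have hle' : n ≤ M := by omega
      obtain ⟨p, hp, hSat⟩ := IH hle'
      set m : ℝ := (M : ℝ) + 1 with hm_def
      have hmn : (n : ℝ) < m := by
        rw [hm_def]
        exact_mod_cast Nat.lt_succ_of_le hle'
      have heq' : ∀ x, PT (dp (dp p n) n) n x
          = ((n:ℝ) ^ 2 - (m - 1) * m * sch x ^ 2) * PT p n x := by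
        intro x
        rw [hSat x, hm_def]
        ring
      obtain ⟨hφ1, hφ2⟩ := ladder_up (m := m) (κ := (n : ℝ))
        (PT_hasDerivAt p n) (PT_hasDerivAt (dp p n) n) (PT_hasDerivAt (dp (dp p n) n) n) heq'
      set q : Polynomial ℝ := Polynomial.C m * (Polynomial.X * p) - dp p n with hq_def
      have hqfun : ∀ x, PT q n x = -PT (dp p n) n x + m * th x * PT p n x := by
        intro x
        simp only [PT, hq_def, Polynomial.eval_sub, Polynomial.eval_mul, Polynomial.eval_C,
          Polynomial.eval_X]
        ring
      have hPTq : PT q n = fun y => -PT (dp p n) n y + m * th y * PT p n y := funext hqfun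
      have hqne : q ≠ 0 := by
        intro h0
        have hzero : ∀ x, PT (dp p n) n x = m * th x * PT p n x := by
          intro x
          have h := hqfun x
          rw [h0] at h
          simp only [PT, Polynomial.eval_zero, zero_mul] at h
          simp only [PT]
          linarith
        have hfun2 : PT (dp p n) n = fun y => m * th y * PT p n y := funext hzero
        have hder : ∀ x, PT (dp (dp p n) n) n x
            = m * sch x ^ 2 * PT p n x + m * th x * PT (dp p n) n x := by
          intro x
          have hR : HasDerivAt (fun y => m * th y * PT p n y)
              (m * sch x ^ 2 * PT p n x + m * th x * PT (dp p n) n x) x := by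
            have h := ((hasDerivAt_th x).const_mul m).mul (PT_hasDerivAt p n x)
            refine h.congr_deriv (Eq.symm ?_)
            try ring
          exact (hfun2 ▸ PT_hasDerivAt (dp p n) n x).unique hR
        have hzero2 : ∀ x, PT p n x = 0 := by
          intro x
          have h1 := heq' x
          have h2 := hder x
          have h3 := hzero x
          have h4 := th_sq x
          have e2 := (h1.symm.trans h2)
          rw [h3] at e2
          have key : ((n:ℝ) ^ 2 - m ^ 2) * PT p n x = 0 := by
            linear_combination e2 + m ^ 2 * PT p n x * h4
          have hne : ((n:ℝ) ^ 2 - m ^ 2) ≠ 0 := by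
            have h5 : (0:ℝ) ≤ (n:ℝ) := Nat.cast_nonneg n
            nlinarith
          exact (mul_eq_zero.1 key).resolve_left hne
        exact PT_ne_zero hp n (funext hzero2)
      refine ⟨q, hqne, ?_⟩
      intro x
      have hfderiv : ∀ y, HasDerivAt (PT q n)
          (-PT (dp (dp p n) n) n y + m * sch y ^ 2 * PT p n y + m * th y * PT (dp p n) n y) y := by
        intro y
        rw [hPTq]
        exact hφ1 y
      have hq1 : PT (dp q n) n = fun y =>
          -PT (dp (dp p n) n) n y + m * sch y ^ 2 * PT p n y + m * th y * PT (dp p n) n y :=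
        funext fun y => (PT_hasDerivAt q n y).unique (hfderiv y)
      have hfderiv2 : HasDerivAt (PT (dp q n) n)
          (((n:ℝ) ^ 2 - m * (m + 1) * sch x ^ 2)
            * (-PT (dp p n) n x + m * th x * PT p n x)) x := by
        rw [hq1]
        exact hφ2 x
      have hfinal := (PT_hasDerivAt (dp q n) n x).unique hfderiv2
      rw [hfinal, ← hqfun x, hm_def]
      push_cast
      ring

end PTaux6


/-- Pöschl–Teller: the negative eigenvalues of
`-d²/dx² - N(N+1) sech²(x)` are exactly `-n²` for `n = 1, …, N`. -/
theorem poschl_teller_spectrum (N : ℕ) (hN : 0 < N) :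
    {μ : ℝ | ∃ κ : ℝ, 0 < κ ∧ μ = -κ ^ 2 ∧
        IsNegEig 1 (fun x : ℝ => (N * (N + 1) : ℝ) * (1 / Real.cosh x) ^ 2) κ} =
      {μ : ℝ | ∃ n : ℕ, 1 ≤ n ∧ n ≤ N ∧ μ = -(n : ℝ) ^ 2} := by
  ext μ
  simp only [Set.mem_setOf_eq]
  constructor
  · rintro ⟨κ, hκ, rfl, hEig⟩
    unfold IsNegEig at hEig
    obtain ⟨-, ψ, hne, hsm, hI, heqn⟩ := hEig
    have heq : ∀ x, deriv (deriv ψ) x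
        = (κ ^ 2 - ((N:ℝ) * ((N:ℝ) + 1)) * PTaux.sch x ^ 2) * ψ x := by
      intro x
      have h := heqn x
      simp only [one_div] at h
      rw [show ((Real.cosh x)⁻¹) = PTaux.sch x from rfl] at h
      linear_combination -h
    obtain ⟨n, hn1, hn2, hn3⟩ := PTaux5.forward N κ hκ ⟨ψ, hne, hsm, hI, heq⟩
    exact ⟨n, hn1, hn2, by rw [hn3]⟩
  · rintro ⟨n, hn1, hn2, rfl⟩
    obtain ⟨p, hp, hSat⟩ := PTaux6.reverse n hn1 N hn2
    have hκpos : (0:ℝ) < n := by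
      have : 0 < n := hn1
      exact_mod_cast this
    refine ⟨(n:ℝ), hκpos, rfl, ?_⟩
    unfold IsNegEig
    refine ⟨hκpos, PTaux.PT p n, PTaux.PT_ne_zero hp n, PTaux.PT_contDiff p n,
      PTaux.PT_integrable_sq p hn1, ?_⟩
    intro x
    have hder1 : deriv (PTaux.PT p n) = PTaux.PT (PTaux.dp p n) n :=
      funext fun y => (PTaux.PT_hasDerivAt p n y).deriv
    rw [hder1, (PTaux.PT_hasDerivAt (PTaux.dp p n) n x).deriv, hSat x]
    simp only [one_div]
    rw [show ((Real.cosh x)⁻¹) = PTaux.sch x from rfl]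
    ring
end
end
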